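/- Let σ be the strategy induced by an RRD Mealy machine in the one-state game, let h be a history consistent with σ such that the probability under σ of never playing a after h is positive and σ(h(bs)^k)(a) > 0 for all k ≥ 0. Then there exists k_0 such that the support of the memory distribution strictly decreases when action a is played after h(bs)^{k_0+1}: some memory state with positive probability after h(bs)^{k_0}b assigns zero next-move probability to a. -/
import Mathlib


open Filter
open scoped Classical

/-- A stochastic Mealy machine for the one-state game with two actions
(`true` = action a, `false` = action b). -/
structure OneMealy (n : ℕ) where
  init : Fin n → ℝ
  next : Fin n → Bool → ℝ
  up : Fin n → Bool → Fin n → ℝ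

def Proper {n : ℕ} (N : OneMealy n) : Prop :=
  (∀ m, 0 ≤ N.init m) ∧ (∑ m, N.init m) = 1 ∧
  (∀ m c, 0 ≤ N.next m c) ∧ (∀ m, ∑ c, N.next m c = 1) ∧
  (∀ m c m', 0 ≤ N.up m c m') ∧ ∀ m c, ∑ m', N.up m c m' = 1

def IsDirac {α : Type} (μ : α → ℝ) : Prop := ∃ x, ∀ y, μ y = if y = x then 1 else 0

def DetInit {n : ℕ} (N : OneMealy n) : Prop := IsDirac N.init
def DetNext {n : ℕ} (N : OneMealy n) : Prop := ∀ m, IsDirac (N.next m)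
def DetUp {n : ℕ} (N : OneMealy n) : Prop := ∀ m c, IsDirac (N.up m c)

/-- Bayesian update of the memory distribution upon playing action `c`. -/
noncomputable def ostep {n : ℕ} (N : OneMealy n) (μ : Fin n → ℝ) (c : Bool) :
    Fin n → ℝ :=
  if (∑ m', μ m' * N.next m' c) = 0 then fun m => ∑ m', μ m' * N.up m' c m
  else fun m => (∑ m', μ m' * N.up m' c m * N.next m' c) / (∑ m', μ m' * N.next m' c)

/-- Distribution over memory states after the word `w` of actions. -/
noncomputable def omemDist {n : ℕ} (N : OneMealy n) (w : List Bool) : Fin n → ℝ :=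
  w.foldl (ostep N) N.init

/-- The strategy induced by the machine. -/
noncomputable def oStrat {n : ℕ} (N : OneMealy n) (w : List Bool) (c : Bool) : ℝ :=
  ∑ m, omemDist N w m * N.next m c

/-- Probability of the cylinder of the finite action word `l` under strategy `σ`. -/
def cylProb (σ : List Bool → Bool → ℝ) (l : List Bool) : ℝ :=
  ∏ i ∈ Finset.range l.length, σ (l.take i) (l.getD i false)

/-- Outcome equivalence in the one-state game: identical cylinder probabilities. -/
noncomputable def OEquiv {n k : ℕ} (N : OneMealy n) (B : OneMealy k) : Prop :=
  ∀ w : List Bool, cylProb (oStrat N) w = cylProb (oStrat B) w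

/-- Consistency of an action word with a strategy. -/
def consistentW (σ : List Bool → Bool → ℝ) (w : List Bool) : Prop :=
  ∀ i < w.length, 0 < σ (w.take i) (w.getD i false)

/-- Forced strict support decrease for RRD machines: if, after a consistent
history `h`, the probability of never playing `a` again is positive (the limit
`L` of the products of `b`-probabilities is positive) while `a` has positive
probability at every subsequent round, then at some round `k0` some memory
state with positive probability after `h(bs)^{k0}b` assigns next-move
probability `0` to `a` (so playing `a` there strictly decreases the support).
Here `true` = a, `false` = b, and `h(bs)^k` corresponds to the word
`h ++ replicate k false`. -/
lemma ostep_prob {n : ℕ} (N : OneMealy n) (hN : Proper N) (μ : Fin n → ℝ)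
    (hpos : ∀ m, 0 ≤ μ m) (hsum : (∑ m, μ m) = 1) (c : Bool) :
    (∀ m, 0 ≤ ostep N μ c m) ∧ (∑ m, ostep N μ c m) = 1 := by
  obtain ⟨-, -, hnext0, -, hup0, hup1⟩ := hN
  unfold ostep
  by_cases hD : (∑ m', μ m' * N.next m' c) = 0
  · simp only [hD, if_true]
    constructor
    · intro m
      exact Finset.sum_nonneg fun m' _ => mul_nonneg (hpos m') (hup0 m' c m)
    · rw [Finset.sum_comm]
      calc (∑ m', ∑ m, μ m' * N.up m' c m)
          = ∑ m', μ m' * ∑ m, N.up m' c m := by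
            simp [Finset.mul_sum]
        _ = 1 := by simp [hup1, hsum]
  · simp only [hD, if_false]
    have hDnn : 0 ≤ (∑ m', μ m' * N.next m' c) :=
      Finset.sum_nonneg fun m' _ => mul_nonneg (hpos m') (hnext0 m' c)
    have hDpos : 0 < (∑ m', μ m' * N.next m' c) := lt_of_le_of_ne hDnn (Ne.symm hD)
    constructor
    · intro m
      apply div_nonneg _ hDnn
      exact Finset.sum_nonneg fun m' _ =>
        mul_nonneg (mul_nonneg (hpos m') (hup0 m' c m)) (hnext0 m' c)
    · rw [← Finset.sum_div, Finset.sum_comm]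
      rw [div_eq_one_iff_eq hD]
      refine Finset.sum_congr rfl fun m' _ => ?_
      calc (∑ m, μ m' * N.up m' c m * N.next m' c)
          = μ m' * N.next m' c * ∑ m, N.up m' c m := by
            rw [Finset.mul_sum]
            exact Finset.sum_congr rfl fun m _ => by ring
        _ = μ m' * N.next m' c := by simp [hup1]

lemma omemDist_prob {n : ℕ} (N : OneMealy n) (hN : Proper N) (w : List Bool) :
    (∀ m, 0 ≤ omemDist N w m) ∧ (∑ m, omemDist N w m) = 1 := by
  induction w using List.reverseRecOn with
  | nil => exact ⟨hN.1, hN.2.1⟩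
  | append_singleton w c ih =>
    have hstep : omemDist N (w ++ [c]) = ostep N (omemDist N w) c := by
      simp [omemDist, List.foldl_append]
    rw [hstep]
    exact ostep_prob N hN _ ih.1 ih.2 c

lemma oStrat_add {n : ℕ} (N : OneMealy n) (hN : Proper N) (w : List Bool) :
    oStrat N w true + oStrat N w false = 1 := by
  obtain ⟨-, hsum⟩ := omemDist_prob N hN w
  unfold oStrat
  rw [← Finset.sum_add_distrib]
  calc (∑ m, (omemDist N w m * N.next m true + omemDist N w m * N.next m false))
      = ∑ m, omemDist N w m * (N.next m true + N.next m false) := by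
        refine Finset.sum_congr rfl fun m _ => by ring
    _ = ∑ m, omemDist N w m := by
        refine Finset.sum_congr rfl fun m _ => ?_
        have := hN.2.2.2.1 m
        rw [Fintype.sum_bool] at this
        rw [this, mul_one]
    _ = 1 := hsum

theorem rrd_forced_support_decrease (n : ℕ) (N : OneMealy n)
    (hN : Proper N) (hup : DetUp N)
    (h : List Bool) (hcons : consistentW (oStrat N) h)
    (L : ℝ) (hL : 0 < L)
    (hlim : Filter.Tendsto
      (fun k => ∏ l ∈ Finset.range k, oStrat N (h ++ List.replicate l false) false)
      Filter.atTop (nhds L))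
    (hposa : ∀ k : ℕ, 0 < oStrat N (h ++ List.replicate k false) true) :
    ∃ (k0 : ℕ) (m : Fin n),
      0 < omemDist N (h ++ List.replicate (k0 + 1) false) m ∧
      N.next m true = 0 := by
  by_contra hcon
  push_neg at hcon
  -- hcon : ∀ k0 m, 0 < omemDist ... → N.next m true ≠ 0
  set S : Finset (Fin n) := Finset.univ.filter (fun m => 0 < N.next m true) with hS
  have hSne : S.Nonempty := by
    have h0 := hposa 0
    unfold oStrat at h0
    obtain ⟨m, -, hm⟩ := Finset.exists_lt_of_sum_lt (by simpa using h0 :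
      (∑ m : Fin n, (0:ℝ)) < ∑ m, omemDist N (h ++ List.replicate 0 false) m * N.next m true)
    have hnext : 0 < N.next m true := by
      by_contra hn
      have := hN.2.2.1 m true
      have : N.next m true = 0 := le_antisymm (not_lt.mp hn) this
      simp [this] at hm
    exact ⟨m, by simp [hS, hnext]⟩
  set ε : ℝ := S.inf' hSne (fun m => N.next m true) with hε
  have hεpos : 0 < ε := by
    rw [hε]
    apply (Finset.lt_inf'_iff hSne).mpr
    intro m hm
    simpa [hS] using hm
  have hεle : ε ≤ 1 := by
    obtain ⟨m, hm⟩ := hSne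
    refine le_trans (Finset.inf'_le _ hm) ?_
    have h1 := hN.2.2.2.1 m
    rw [Fintype.sum_bool] at h1
    have := hN.2.2.1 m false
    linarith
  -- for k ≥ 1, oStrat true ≥ ε
  have hkey : ∀ k : ℕ, ε ≤ oStrat N (h ++ List.replicate (k+1) false) true := by
    intro k
    obtain ⟨hpos, hsum⟩ := omemDist_prob N hN (h ++ List.replicate (k+1) false)
    unfold oStrat
    calc ε = ∑ m, omemDist N (h ++ List.replicate (k+1) false) m * ε := by
          rw [← Finset.sum_mul, hsum, one_mul]
      _ ≤ ∑ m, omemDist N (h ++ List.replicate (k+1) false) m * N.next m true := by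
          refine Finset.sum_le_sum fun m _ => ?_
          rcases eq_or_lt_of_le (hpos m) with heq | hlt
          · rw [← heq]; simp
          · refine mul_le_mul_of_nonneg_left ?_ (hpos m)
            have hne := hcon k m hlt
            have hmpos : 0 < N.next m true := lt_of_le_of_ne (hN.2.2.1 m true) (Ne.symm hne)
            exact Finset.inf'_le _ (by simp [hS, hmpos])
  have hfb : ∀ k : ℕ, oStrat N (h ++ List.replicate (k+1) false) false ≤ 1 - ε := by
    intro k
    have := oStrat_add N hN (h ++ List.replicate (k+1) false)
    have := hkey k
    linarith
  have hfnn : ∀ k : ℕ, 0 ≤ oStrat N (h ++ List.replicate k false) false := by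
    intro k
    obtain ⟨hpos, -⟩ := omemDist_prob N hN (h ++ List.replicate k false)
    exact Finset.sum_nonneg fun m _ => mul_nonneg (hpos m) (hN.2.2.1 m false)
  have hf1 : ∀ k : ℕ, oStrat N (h ++ List.replicate k false) false ≤ 1 := by
    intro k
    have h1 := oStrat_add N hN (h ++ List.replicate k false)
    obtain ⟨hpos, -⟩ := omemDist_prob N hN (h ++ List.replicate k false)
    have : 0 ≤ oStrat N (h ++ List.replicate k false) true :=
      Finset.sum_nonneg fun m _ => mul_nonneg (hpos m) (hN.2.2.1 m true)
    linarith
  set P : ℕ → ℝ := fun k => ∏ l ∈ Finset.range k, oStrat N (h ++ List.replicate l false) false with hP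
  have hPbound : ∀ k : ℕ, P (k+1) ≤ (1-ε)^k := by
    intro k
    rw [hP]
    simp only
    rw [Finset.prod_range_succ']
    calc (∏ l ∈ Finset.range k, oStrat N (h ++ List.replicate (l+1) false) false) *
          oStrat N (h ++ List.replicate 0 false) false
        ≤ (∏ l ∈ Finset.range k, (1-ε)) * 1 :=
          mul_le_mul (Finset.prod_le_prod (fun l _ => hfnn (l+1)) (fun l _ => hfb l))
            (hf1 0) (hfnn 0) (Finset.prod_nonneg fun l _ => by linarith)
      _ = (1-ε)^k := by rw [mul_one, Finset.prod_const, Finset.card_range]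
  have hPnn : ∀ k : ℕ, 0 ≤ P k := fun k =>
    Finset.prod_nonneg fun l _ => hfnn l
  have hshift : Filter.Tendsto (fun k => P (k+1)) Filter.atTop (nhds L) :=
    hlim.comp (Filter.tendsto_add_atTop_nat 1)
  have hzero : Filter.Tendsto (fun k => P (k+1)) Filter.atTop (nhds 0) := by
    apply squeeze_zero (fun k => hPnn (k+1)) hPbound
    exact tendsto_pow_atTop_nhds_zero_of_lt_one (by linarith) (by linarith)
  have : L = 0 := tendsto_nhds_unique hshift hzero
  linarith
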